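/- Let m ≥ 1, q : ℝ^m → ℂ, and let φ, ψ : ℝ^m → ℂ be C² functions satisfying (−Δψ + qψ) = 0 and (−Δφ + conj(q)φ) = 0 on ℝ^m. Set Wᵢ = conj(φ)·∂ψ/∂xᵢ − ∂(conj φ)/∂xᵢ·ψ. Then for every rectangular box [a,b] = Π_{i=1}^m [aᵢ,bᵢ] ⊂ ℝ^m (with aᵢ ≤ bᵢ), the total flux of W through the boundary vanishes: Σ_{i=1}^m ( ∫_{F_i(b_i)} Wᵢ d𝜆_{m−1} − ∫_{F_i(a_i)} Wᵢ d𝜆_{m−1} ) = 0, where F_i(c) denotes the face {x ∈ [a,b] : xᵢ = c} equipped with (m−1)-dimensional Lebesgue measure. -/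

import Mathlib

open scoped BigOperators
open MeasureTheory

/-- Partial derivative of a `ℂ`-valued function on `ℝ^m` in direction `i`. -/
noncomputable def pd5 {m : ℕ} (f : (Fin m → ℝ) → ℂ) (i : Fin m) (x : Fin m → ℝ) : ℂ :=
  fderiv ℝ f x (Pi.single i 1)

/-- Second partial derivative `∂²f/∂xᵢ²` as an iterated first partial. -/
noncomputable def pd5sq {m : ℕ} (f : (Fin m → ℝ) → ℂ) (i : Fin m) (x : Fin m → ℝ) : ℂ :=
  pd5 (fun y => pd5 f i y) i x

/-- The Lagrange current `Wᵢ = conj(φ)·∂ᵢψ − ∂ᵢ(conj φ)·ψ` of the perturbed Laplace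
operator. -/
noncomputable def lagrangeCurrent5 {m : ℕ} (φ ψ : (Fin m → ℝ) → ℂ) (i : Fin m)
    (y : Fin m → ℝ) : ℂ :=
  (starRingEnd ℂ) (φ y) * pd5 ψ i y - pd5 (fun z => (starRingEnd ℂ) (φ z)) i y * ψ y

section aux
variable {m : ℕ}

lemma contDiff_pd5 {f : (Fin m → ℝ) → ℂ} (hf : ContDiff ℝ 2 f) (i : Fin m) :
    ContDiff ℝ 1 (pd5 f i) :=
  (hf.fderiv_right (by norm_num)).clm_apply contDiff_const

lemma conj_contDiff {f : (Fin m → ℝ) → ℂ} (hf : ContDiff ℝ 2 f) :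
    ContDiff ℝ 2 (fun z => (starRingEnd ℂ) (f z)) :=
  Complex.conjCLE.contDiff.comp hf

lemma pd5_conj {f : (Fin m → ℝ) → ℂ} (hf : Differentiable ℝ f) (i : Fin m) (x : Fin m → ℝ) :
    pd5 (fun z => (starRingEnd ℂ) (f z)) i x = (starRingEnd ℂ) (pd5 f i x) := by
  have h : HasFDerivAt (fun z => (starRingEnd ℂ) (f z))
      ((Complex.conjCLE : ℂ →L[ℝ] ℂ).comp (fderiv ℝ f x)) x :=
    (Complex.conjCLE : ℂ →L[ℝ] ℂ).hasFDerivAt.comp x (hf x).hasFDerivAt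
  simp [pd5, h.fderiv]

lemma pd5_mul {f g : (Fin m → ℝ) → ℂ} (hf : Differentiable ℝ f) (hg : Differentiable ℝ g)
    (i : Fin m) (x : Fin m → ℝ) :
    pd5 (fun y => f y * g y) i x = pd5 f i x * g x + f x * pd5 g i x := by
  have := fderiv_fun_mul (𝕜 := ℝ) (hf x) (hg x)
  simp only [pd5, this, ContinuousLinearMap.add_apply, ContinuousLinearMap.coe_smul',
    Pi.smul_apply, smul_eq_mul]
  ring

end aux

/-- Stokes-theorem consequence (2.8): for kernel elements of `L = −Δ + q` and of
`L* = −Δ + conj q`, the total flux of the Lagrange current through the boundary of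
any rectangular box vanishes.  The face `Fᵢ(c)` of the box `[a,b] ⊆ ℝ^{n+1}` is
parametrized by the remaining coordinates via `Fin.insertNth i c`, and carries
`(m−1)`-dimensional Lebesgue measure. -/
theorem flux_through_box_boundary_vanishes (n : ℕ)
    (q φ ψ : (Fin (n + 1) → ℝ) → ℂ) (hφ : ContDiff ℝ 2 φ) (hψ : ContDiff ℝ 2 ψ)
    (hLψ : ∀ x, -(∑ i, pd5sq ψ i x) + q x * ψ x = 0)
    (hLφ : ∀ x, -(∑ i, pd5sq φ i x) + (starRingEnd ℂ) (q x) * φ x = 0)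
    (a b : Fin (n + 1) → ℝ) (hab : ∀ i, a i ≤ b i) :
    ∑ i : Fin (n + 1),
      ((∫ y in Set.Icc (a ∘ i.succAbove) (b ∘ i.succAbove),
          lagrangeCurrent5 φ ψ i (i.insertNth (b i) y)) -
        ∫ y in Set.Icc (a ∘ i.succAbove) (b ∘ i.succAbove),
          lagrangeCurrent5 φ ψ i (i.insertNth (a i) y)) = 0 := by
  set cφ : (Fin (n + 1) → ℝ) → ℂ := fun z => (starRingEnd ℂ) (φ z) with hcφ
  have hcφ2 : ContDiff ℝ 2 cφ := conj_contDiff hφ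
  have hψ1 : Differentiable ℝ ψ := hψ.differentiable (by norm_num)
  have hφ1 : Differentiable ℝ φ := hφ.differentiable (by norm_num)
  have hcφ1 : Differentiable ℝ cφ := hcφ2.differentiable (by norm_num)
  -- W i is C¹
  have hW : ∀ i, ContDiff ℝ 1 (lagrangeCurrent5 φ ψ i) := by
    intro i
    exact ((hcφ2.of_le (by norm_num)).mul (contDiff_pd5 hψ i)).sub
      ((contDiff_pd5 hcφ2 i).mul (hψ.of_le (by norm_num)))
  have hWd : ∀ i, Differentiable ℝ (lagrangeCurrent5 φ ψ i) := fun i =>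
    (hW i).differentiable (by norm_num)
  -- divergence of W vanishes
  have hdiv : ∀ x, ∑ i, pd5 (lagrangeCurrent5 φ ψ i) i x = 0 := by
    intro x
    have key : ∀ i, pd5 (lagrangeCurrent5 φ ψ i) i x
        = cφ x * pd5sq ψ i x - (starRingEnd ℂ) (pd5sq φ i x) * ψ x := by
      intro i
      have hdψ : Differentiable ℝ (pd5 ψ i) := (contDiff_pd5 hψ i).differentiable (by norm_num)
      have hdcφ : Differentiable ℝ (pd5 cφ i) := (contDiff_pd5 hcφ2 i).differentiable (by norm_num)
      have e1 : pd5 (fun y => cφ y * pd5 ψ i y) i x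
          = pd5 cφ i x * pd5 ψ i x + cφ x * pd5sq ψ i x := by
        rw [pd5_mul hcφ1 hdψ]; rfl
      have e2 : pd5 (fun y => pd5 cφ i y * ψ y) i x
          = pd5sq cφ i x * ψ x + pd5 cφ i x * pd5 ψ i x := by
        rw [pd5_mul hdcφ hψ1]; rfl
      have e3 : pd5sq cφ i x = (starRingEnd ℂ) (pd5sq φ i x) := by
        have : (fun y => pd5 cφ i y) = fun y => (starRingEnd ℂ) (pd5 φ i y) :=
          funext fun y => pd5_conj hφ1 i y
        rw [pd5sq, this, pd5_conj ((contDiff_pd5 hφ i).differentiable (by norm_num)) i x]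
        rfl
      have : lagrangeCurrent5 φ ψ i
          = fun y => (fun y => cφ y * pd5 ψ i y) y - (fun y => pd5 cφ i y * ψ y) y := rfl
      rw [this, pd5]
      rw [fderiv_fun_sub (f := fun y => cφ y * pd5 ψ i y) (g := fun y => pd5 cφ i y * ψ y)
        ((hcφ1.mul hdψ) x) ((hdcφ.mul hψ1) x)]
      simp only [ContinuousLinearMap.coe_sub', Pi.sub_apply]
      rw [show (fderiv ℝ (fun y => cφ y * pd5 ψ i y) x) (Pi.single i 1)
          = pd5 (fun y => cφ y * pd5 ψ i y) i x from rfl,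
        show (fderiv ℝ (fun y => pd5 cφ i y * ψ y) x) (Pi.single i 1)
          = pd5 (fun y => pd5 cφ i y * ψ y) i x from rfl, e1, e2, e3]
      ring
    simp only [key, Finset.sum_sub_distrib, ← Finset.mul_sum, ← Finset.sum_mul,
      ← map_sum]
    have h1 : ∑ i, pd5sq ψ i x = q x * ψ x := by linear_combination -(hLψ x)
    have h2 : ∑ i, pd5sq φ i x = (starRingEnd ℂ) (q x) * φ x := by linear_combination -(hLφ x)
    rw [h1, h2]
    simp [hcφ, mul_comm, mul_left_comm]
    ring
  -- apply divergence theorem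
  have := MeasureTheory.integral_divergence_of_hasFDerivAt_off_countable'
    (E := ℂ) a b hab (fun i => lagrangeCurrent5 φ ψ i)
    (fun i x => fderiv ℝ (lagrangeCurrent5 φ ψ i) x) ∅ Set.countable_empty
    (fun i => ((hW i).continuous).continuousOn)
    (fun x _ i => ((hWd i) x).hasFDerivAt)
    (by
      have : (fun x => ∑ i, fderiv ℝ (lagrangeCurrent5 φ ψ i) x (Pi.single i 1))
          = fun _ => (0 : ℂ) := funext fun x => hdiv x
      rw [this]
      exact integrableOn_zero)
  have h0 : (∫ x in Set.Icc a b,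
      ∑ i, fderiv ℝ (lagrangeCurrent5 φ ψ i) x (Pi.single i 1)) = 0 := by
    have hz : (fun x : Fin (n + 1) → ℝ =>
        ∑ i, fderiv ℝ (lagrangeCurrent5 φ ψ i) x (Pi.single i 1)) = fun _ => 0 :=
      funext fun x => hdiv x
    rw [hz]
    simp
  simpa using this.symm.trans h0
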